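/- arXiv:1711.03185 — 8 statements merged into one kernel-verified Lean document; each statement's English description precedes it below -/
import Mathlib

section
/- Each set S_i = conv{0, e_1, ..., e_{i-1}} \ conv{0, e_1, ..., e_{i-2}} is convex. -/
open Set

noncomputable def basisPts (d t : ℕ) : Set (Fin d → ℝ) :=
  insert 0 {x | ∃ m : Fin d, (m : ℕ) < t ∧ x = Pi.single m 1}

noncomputable def F (d t : ℕ) : Set (Fin d → ℝ) := convexHull ℝ (basisPts d t)

noncomputable def S (d i : ℕ) : Set (Fin d → ℝ) :=
  F d (i - 1) \ (if i ≤ 1 then ∅ else F d (i - 2))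

lemma coord_linear (d : ℕ) (j : Fin d) : IsLinearMap ℝ (fun y : Fin d → ℝ => y j) :=
  ⟨fun _ _ => rfl, fun _ _ => rfl⟩

lemma F_nonneg {d t : ℕ} {x : Fin d → ℝ} (hx : x ∈ F d t) (j : Fin d) : 0 ≤ x j := by
  have h : F d t ⊆ {y : Fin d → ℝ | 0 ≤ y j} := by
    apply convexHull_min _ (convex_halfSpace_ge (coord_linear d j) 0)
    rintro y (rfl | ⟨m, hm, rfl⟩)
    · simp
    · rcases eq_or_ne j m with rfl | h
      · simp
      · simp [Pi.single_apply, h]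
  exact h hx

lemma F_coord_zero {d t : ℕ} {x : Fin d → ℝ} (hx : x ∈ F d t) (j : Fin d)
    (hj : t ≤ (j : ℕ)) : x j = 0 := by
  have h : F d t ⊆ {y : Fin d → ℝ | y j = 0} := by
    apply convexHull_min _ (convex_hyperplane (coord_linear d j) 0)
    rintro y (rfl | ⟨m, hm, rfl⟩)
    · simp
    · have : j ≠ m := by
        intro h; subst h; omega
      simp [Pi.single_apply, this]
  exact h hx

lemma basisPts_succ {d t : ℕ} (ht : t < d) :
    basisPts d (t + 1) = insert (Pi.single (⟨t, ht⟩ : Fin d) 1) (basisPts d t) := by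
  ext y
  simp only [basisPts, mem_insert_iff, mem_setOf_eq]
  constructor
  · rintro (rfl | ⟨m, hm, rfl⟩)
    · right; left; rfl
    · rcases Nat.lt_succ_iff_lt_or_eq.mp hm with h | h
      · right; right; exact ⟨m, h, rfl⟩
      · left
        have hm : m = (⟨t, ht⟩ : Fin d) := by
          apply Fin.ext; simpa using h
        rw [hm]
  · rintro (rfl | rfl | ⟨m, hm, rfl⟩)
    · right; exact ⟨⟨t, ht⟩, Nat.lt_succ_self t, rfl⟩
    · left; rfl
    · exact Or.inr ⟨m, Nat.lt_succ_of_lt hm, rfl⟩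

lemma mem_F_of_coord_zero {d t : ℕ} (ht : t < d) {x : Fin d → ℝ}
    (hx : x ∈ F d (t + 1)) (hx0 : x (⟨t, ht⟩ : Fin d) = 0) : x ∈ F d t := by
  have hne : (basisPts d t).Nonempty := ⟨0, Or.inl rfl⟩
  rw [F, basisPts_succ ht, convexHull_insert hne, mem_convexJoin] at hx
  obtain ⟨e, he, z, hz, hseg⟩ := hx
  rw [mem_singleton_iff] at he
  subst he
  obtain ⟨a, b, ha, hb, hab, hx⟩ := hseg
  have hzm : 0 ≤ z (⟨t, ht⟩ : Fin d) := F_nonneg hz _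
  have : x (⟨t, ht⟩ : Fin d) = a * 1 + b * z ⟨t, ht⟩ := by
    rw [← hx]; simp
  have ha0 : a = 0 := by nlinarith
  have hb1 : b = 1 := by linarith
  subst ha0 hb1
  rw [← hx]
  simpa [F] using hz

theorem S_convex (k i : ℕ) (hi1 : 1 ≤ i) (hik : i ≤ k) :
    Convex ℝ (S (k - 1) i) := by
  rcases eq_or_lt_of_le hi1 with h1 | h2
  · -- i = 1
    have : S (k - 1) i = F (k - 1) 0 := by
      simp [S, ← h1]
    rw [this]
    exact convex_convexHull ℝ _
  · -- i ≥ 2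
    have hi2 : 2 ≤ i := h2
    have hk2 : 2 ≤ k := le_trans hi2 hik
    have htd : i - 2 < k - 1 := by omega
    set d := k - 1
    set m : Fin d := ⟨i - 2, htd⟩
    have hkey : S d i = F d (i - 1) ∩ {x | 0 < x m} := by
      ext x
      simp only [S, if_neg (by omega : ¬ i ≤ 1), mem_diff, mem_inter_iff, mem_setOf_eq]
      constructor
      · rintro ⟨hx1, hx2⟩
        refine ⟨hx1, ?_⟩
        rcases lt_or_eq_of_le (F_nonneg hx1 m) with h | h
        · exact h
        · exfalso
          apply hx2
          have : i - 1 = (i - 2) + 1 := by omega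
          rw [this] at hx1
          exact mem_F_of_coord_zero htd hx1 h.symm
      · rintro ⟨hx1, hx2⟩
        refine ⟨hx1, fun hx3 => ?_⟩
        have := F_coord_zero hx3 m (by simp [m])
        linarith
    rw [hkey]
    exact (convex_convexHull ℝ _).inter (convex_halfSpace_gt (coord_linear d m) 0)
end

section
/- Let T ⊆ {1, ..., k} be nonempty with maximum element m. Then the union ⋃_{i ∈ T} S_i is convex if (and only if) the set ⋃_{i ∈ T, i < m} S_i is convex, where S_m is a convex subset of the simplex conv{0, e_1, ..., e_{m-1}} whose removed facet conv{0, e_1, ..., e_{m-2}} contains all S_i with i < m. -/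
open Set

lemma F_mono (d : ℕ) {t t' : ℕ} (h : t ≤ t') : F d t ⊆ F d t' := by
  apply convexHull_mono
  rintro x (rfl | ⟨j, hj, rfl⟩)
  · exact Set.mem_insert _ _
  · exact Set.mem_insert_iff.mpr (Or.inr ⟨j, lt_of_lt_of_le hj h, rfl⟩)

lemma F_subset_char (d t : ℕ) :
    F d t ⊆ {x : Fin d → ℝ | (∀ j, 0 ≤ x j) ∧ (∑ j, x j) ≤ 1 ∧
      ∀ j : Fin d, t ≤ (j : ℕ) → x j = 0} := by
  apply convexHull_min
  · rintro y (rfl | ⟨j, hj, rfl⟩)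
    · exact ⟨fun j => le_refl 0, by simp, fun j _ => rfl⟩
    · refine ⟨fun i => ?_, ?_, fun i hi => ?_⟩
      · rcases eq_or_ne i j with rfl | h
        · simp
        · simp [Pi.single_apply, h]
      · simp [Pi.single_apply]
      · have hij : i ≠ j := by rintro rfl; omega
        simp [Pi.single_apply, hij]
  · intro p hp q hq a b ha hb hab
    refine ⟨fun j => ?_, ?_, fun j hj => ?_⟩
    · exact add_nonneg (mul_nonneg ha (hp.1 j)) (mul_nonneg hb (hq.1 j))
    · have h : ∑ j, (a • p + b • q) j = a * (∑ j, p j) + b * (∑ j, q j) := by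
        simp [Finset.sum_add_distrib, Finset.mul_sum]
      rw [h]
      nlinarith [hp.2.1, hq.2.1]
    · simp [hp.2.2 j hj, hq.2.2 j hj]

lemma mem_F_iff (d t : ℕ) (x : Fin d → ℝ) :
    x ∈ F d t ↔ (∀ j, 0 ≤ x j) ∧ (∑ j, x j) ≤ 1 ∧ ∀ j : Fin d, t ≤ (j : ℕ) → x j = 0 := by
  constructor
  · exact fun hx => F_subset_char d t hx
  · rintro ⟨h0, h1, h2⟩
    have hx : x = ∑ o ∈ (Finset.univ : Finset (Option (Fin d))),
        (o.elim (1 - ∑ j, x j) x) •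
        (o.elim (0 : Fin d → ℝ)
          (fun j => if (j : ℕ) < t then Pi.single j (1 : ℝ) else (0 : Fin d → ℝ))) := by
      rw [Fintype.sum_option]
      simp only [Option.elim]
      rw [smul_zero, zero_add]
      funext i
      rw [Finset.sum_apply]
      have key : ∀ j : Fin d,
          (x j • (if (j : ℕ) < t then Pi.single j (1 : ℝ) else (0 : Fin d → ℝ))) i
          = if i = j then x j else 0 := by
        intro j
        by_cases hj : (j : ℕ) < t
        · simp [hj, Pi.single_apply, mul_ite]
        · have hz := h2 j (le_of_not_gt hj)
          simp [hj, hz]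
      simp only [key]
      simp
    rw [hx]
    apply (convex_convexHull ℝ (basisPts d t)).sum_mem
    · rintro (_ | j) _
      · simpa using h1
      · exact h0 j
    · rw [Fintype.sum_option]; simp
    · rintro (_ | j) _
      · exact subset_convexHull ℝ _ (Set.mem_insert _ _)
      · by_cases hj : (j : ℕ) < t
        · refine subset_convexHull ℝ _ (Set.mem_insert_iff.mpr (Or.inr ⟨j, hj, ?_⟩))
          simp [hj]
        · simp only [Option.elim, hj, if_false]
          exact subset_convexHull ℝ _ (Set.mem_insert _ _)

theorem union_S_convex_iff_erase_max (k : ℕ) (T : Finset ℕ)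
    (hT : T ⊆ Finset.Icc 1 k) (hne : T.Nonempty) :
    Convex ℝ (⋃ i ∈ T, S (k - 1) i) ↔
      Convex ℝ (⋃ i ∈ T.filter (· < T.max' hne), S (k - 1) i) := by
  set d := k - 1 with hd
  set m := T.max' hne with hm
  have hmT : m ∈ T := T.max'_mem hne
  have hm1 : 1 ≤ m := (Finset.mem_Icc.mp (hT hmT)).1
  have hmk : m ≤ k := (Finset.mem_Icc.mp (hT hmT)).2
  rcases eq_or_lt_of_le hm1 with h1 | h2
  · -- m = 1
    have hTsing : T = {1} := by
      apply Finset.eq_singleton_iff_unique_mem.mpr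
      refine ⟨h1 ▸ hmT, fun i hi => ?_⟩
      have h3 := Finset.le_max' T i hi
      have h4 := (Finset.mem_Icc.mp (hT hi)).1
      omega
    apply iff_of_true
    · have h5 : (⋃ i ∈ T, S d i) = S d 1 := by rw [hTsing]; simp
      rw [h5]
      have h6 : S d 1 = F d 0 := by simp [S]
      rw [h6]
      exact convex_convexHull ℝ _
    · have h5 : T.filter (· < m) = ∅ := by
        rw [hTsing]
        ext i
        simp only [Finset.mem_filter, Finset.mem_singleton, Finset.notMem_empty, iff_false]
        rintro ⟨rfl, h⟩
        omega
      rw [h5]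
      simp only [Finset.notMem_empty, iUnion_of_empty, iUnion_empty]
      exact convex_empty
  · -- 2 ≤ m
    have hk2 : 2 ≤ k := le_trans h2 hmk
    have hj0 : m - 2 < d := by omega
    set j0 : Fin d := ⟨m - 2, hj0⟩ with hj0def
    have hA0 : ∀ x ∈ F d (m - 2), x j0 = 0 := fun x hx =>
      ((mem_F_iff d (m - 2) x).mp hx).2.2 j0 (le_refl _)
    have hSm : S d m = F d (m - 1) \ F d (m - 2) := by
      simp [S, show ¬ (m ≤ 1) by omega]
    have hSmF : S d m ⊆ F d (m - 1) := hSm ▸ diff_subset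
    have hSmpos : ∀ y ∈ S d m, 0 < y j0 := by
      intro y hy
      rw [hSm] at hy
      obtain ⟨hy1, hy2⟩ := hy
      obtain ⟨hpos, hsum, hzero⟩ := (mem_F_iff _ _ _).mp hy1
      rcases lt_or_eq_of_le (hpos j0) with h | h
      · exact h
      · exfalso
        apply hy2
        rw [mem_F_iff]
        refine ⟨hpos, hsum, fun j hj => ?_⟩
        rcases lt_or_ge (j : ℕ) (m - 1) with hj' | hj'
        · have hjj : j = j0 := Fin.ext (by simp [hj0def]; omega)
          rw [hjj, ← h]
        · exact hzero j hj'
    set A := ⋃ i ∈ T.filter (· < m), S d i with hA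
    have hAsub : A ⊆ F d (m - 2) := by
      intro x hx
      simp only [hA, mem_iUnion, Finset.mem_filter] at hx
      obtain ⟨i, ⟨hiT, him⟩, hxi⟩ := hx
      have hi1 : 1 ≤ i := (Finset.mem_Icc.mp (hT hiT)).1
      exact F_mono d (by omega : i - 1 ≤ m - 2) (diff_subset hxi)
    have hsplit : (⋃ i ∈ T, S d i) = A ∪ S d m := by
      ext x
      simp only [hA, mem_iUnion, mem_union, Finset.mem_filter]
      constructor
      · rintro ⟨i, hiT, hx⟩
        rcases lt_or_eq_of_le (T.le_max' i hiT) with h | h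
        · exact Or.inl ⟨i, ⟨hiT, h⟩, hx⟩
        · right; rwa [h] at hx
      · rintro (⟨i, ⟨hiT, _⟩, hx⟩ | hx)
        · exact ⟨i, hiT, hx⟩
        · exact ⟨m, hmT, hx⟩
    rw [hsplit]
    have hF1convex : Convex ℝ (F d (m - 1)) := convex_convexHull ℝ _
    have happ : ∀ (a b : ℝ) (x y : Fin d → ℝ), (a • x + b • y) j0 = a * x j0 + b * y j0 := by
      intro a b x y; simp
    constructor
    · intro h x hx y hy a b ha hb hab
      have hz := h (mem_union_left _ hx) (mem_union_left _ hy) ha hb hab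
      have hz0 : (a • x + b • y) j0 = 0 := by
        rw [happ, hA0 x (hAsub hx), hA0 y (hAsub hy)]; ring
      rcases hz with hz | hz
      · exact hz
      · exact absurd hz0 (ne_of_gt (hSmpos _ hz))
    · intro h x hx y hy a b ha hb hab
      rcases hx with hx | hx <;> rcases hy with hy | hy
      · exact Or.inl (h hx hy ha hb hab)
      · -- x ∈ A, y ∈ S m
        rcases hb.eq_or_lt with hb0 | hb0
        · have ha1 : a = 1 := by linarith
          have he : a • x + b • y = x := by rw [← hb0, ha1]; simp
          rw [he]; exact Or.inl hx
        · refine Or.inr (hSm ▸ ⟨?_, ?_⟩)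
          · exact hF1convex (F_mono d (by omega) (hAsub hx)) (hSmF hy) ha hb hab
          · intro hz
            have h1 := hSmpos y hy
            have h3 := hA0 _ hz
            rw [happ, hA0 x (hAsub hx), mul_zero, zero_add] at h3
            nlinarith [mul_pos hb0 h1]
      · -- x ∈ S m, y ∈ A
        rcases ha.eq_or_lt with ha0 | ha0
        · have hb1 : b = 1 := by linarith
          have he : a • x + b • y = y := by rw [← ha0, hb1]; simp
          rw [he]; exact Or.inl hy
        · refine Or.inr (hSm ▸ ⟨?_, ?_⟩)
          · exact hF1convex (hSmF hx) (F_mono d (by omega) (hAsub hy)) ha hb hab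
          · intro hz
            have h1 := hSmpos x hx
            have h3 := hA0 _ hz
            rw [happ, hA0 y (hAsub hy), mul_zero, add_zero] at h3
            nlinarith [mul_pos ha0 h1]
      · -- both in S m
        refine Or.inr (hSm ▸ ⟨?_, ?_⟩)
        · exact hF1convex (hSmF hx) (hSmF hy) ha hb hab
        · intro hz
          have h1 := hSmpos x hx
          have h2 := hSmpos y hy
          have h3 := hA0 _ hz
          rw [happ] at h3
          have hab' : 0 < a ∨ 0 < b := by
            by_contra hc
            push_neg at hc
            have := hc.1
            have := hc.2
            linarith
          rcases hab' with hpa | hpb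
          · linarith [mul_pos hpa h1, mul_nonneg hb h2.le]
          · linarith [mul_pos hpb h2, mul_nonneg ha h1.le]
end

section
/- Every binary code is convex realizable: given any collection C of distinct nonempty subsets σ_1, ..., σ_k of {1, ..., n}, there exist convex sets U_1, ..., U_n ⊆ ℝ^{k-1} such that for every nonempty σ ⊆ {1, ..., n}, the region (⋂_{j ∈ σ} U_j) \ (⋃_{l ∉ σ} U_l) is nonempty if and only if σ ∈ C. -/
open Set

/-- The least index of a nonzero coordinate of `x`, or `d` if `x = 0`. -/
noncomputable def leadIdx {d : ℕ} (x : Fin d → ℝ) : ℕ :=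
  sInf {m | m = d ∨ ∃ h : m < d, x ⟨m, h⟩ ≠ 0}

lemma leadIdx_mem {d : ℕ} (x : Fin d → ℝ) :
    leadIdx x = d ∨ ∃ h : leadIdx x < d, x ⟨leadIdx x, h⟩ ≠ 0 :=
  Nat.sInf_mem (⟨d, Or.inl rfl⟩ : Set.Nonempty {m | m = d ∨ ∃ h : m < d, x ⟨m, h⟩ ≠ 0})

lemma leadIdx_le {d : ℕ} (x : Fin d → ℝ) : leadIdx x ≤ d :=
  Nat.sInf_le (Or.inl rfl)

lemma coord_eq_zero {d : ℕ} (x : Fin d → ℝ) {m : ℕ} (h : m < d) (hm : m < leadIdx x) :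
    x ⟨m, h⟩ = 0 := by
  have hnm := Nat.notMem_of_lt_sInf hm
  simp only [Set.mem_setOf_eq] at hnm
  push_neg at hnm
  exact hnm.2 h

lemma leadIdx_eq {d : ℕ} (x : Fin d → ℝ) {m : ℕ}
    (hm : m = d ∨ ∃ h : m < d, x ⟨m, h⟩ ≠ 0)
    (hlt : ∀ p (h : p < d), p < m → x ⟨p, h⟩ = 0) : leadIdx x = m := by
  rcases lt_trichotomy (leadIdx x) m with hl | he | hg
  · exfalso
    rcases leadIdx_mem x with heq | ⟨h2, hne⟩
    · rcases hm with rfl | ⟨hmd, _⟩ <;> omega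
    · exact hne (hlt _ h2 hl)
  · exact he
  · exact absurd (Nat.sInf_le hm) (not_le.mpr hg)

lemma leadIdx_combo {d : ℕ} {x y : Fin d → ℝ} (hx : ∀ i, 0 ≤ x i) (hy : ∀ i, 0 ≤ y i)
    {a b : ℝ} (ha : 0 < a) (hb : 0 < b) :
    leadIdx (a • x + b • y) = min (leadIdx x) (leadIdx y) := by
  set m := min (leadIdx x) (leadIdx y) with hmdef
  apply leadIdx_eq
  · by_cases hd : m = d
    · exact Or.inl hd
    · have hmd : m < d :=
        lt_of_le_of_ne (le_trans (min_le_left _ _) (leadIdx_le x)) hd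
      refine Or.inr ⟨hmd, ?_⟩
      have hz : (a • x + b • y) ⟨m, hmd⟩ = a * x ⟨m, hmd⟩ + b * y ⟨m, hmd⟩ := rfl
      rcases min_cases (leadIdx x) (leadIdx y) with ⟨h1, _⟩ | ⟨h1, _⟩
      · -- m = leadIdx x
        have hx' : x ⟨m, hmd⟩ ≠ 0 := by
          rcases leadIdx_mem x with heq | ⟨h2, hne⟩
          · omega
          · convert hne using 3 <;> omega
        have hxpos : 0 < x ⟨m, hmd⟩ := lt_of_le_of_ne (hx _) (Ne.symm hx')
        have : 0 < a * x ⟨m, hmd⟩ + b * y ⟨m, hmd⟩ :=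
          add_pos_of_pos_of_nonneg (mul_pos ha hxpos) (mul_nonneg hb.le (hy _))
        rw [hz]; exact ne_of_gt this
      · -- m = leadIdx y
        have hy' : y ⟨m, hmd⟩ ≠ 0 := by
          rcases leadIdx_mem y with heq | ⟨h2, hne⟩
          · omega
          · convert hne using 3 <;> omega
        have hypos : 0 < y ⟨m, hmd⟩ := lt_of_le_of_ne (hy _) (Ne.symm hy')
        have : 0 < a * x ⟨m, hmd⟩ + b * y ⟨m, hmd⟩ :=
          add_pos_of_nonneg_of_pos (mul_nonneg ha.le (hx _)) (mul_pos hb hypos)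
        rw [hz]; exact ne_of_gt this
  · intro p h hp
    have hpx : p < leadIdx x := lt_of_lt_of_le hp (min_le_left _ _)
    have hpy : p < leadIdx y := lt_of_lt_of_le hp (min_le_right _ _)
    have : (a • x + b • y) ⟨p, h⟩ = a * x ⟨p, h⟩ + b * y ⟨p, h⟩ := rfl
    rw [this, coord_eq_zero x h hpx, coord_eq_zero y h hpy]
    ring

lemma leadIdx_single {k : ℕ} (i : Fin k) :
    leadIdx (fun m : Fin (k - 1) => if (m : ℕ) = (i : ℕ) then (1 : ℝ) else 0) = (i : ℕ) := by
  have hik := i.isLt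
  apply leadIdx_eq
  · by_cases h : (i : ℕ) < k - 1
    · refine Or.inr ⟨h, ?_⟩
      simp
    · left; omega
  · intro p h hp
    have : ((⟨p, h⟩ : Fin (k - 1)) : ℕ) ≠ (i : ℕ) := by simp; omega
    simp [this]

theorem every_code_convex_realizable (n k : ℕ) (σs : Fin k → Finset (Fin n))
    (hne : ∀ i, (σs i).Nonempty) (hinj : Function.Injective σs) :
    ∃ U : Fin n → Set (Fin (k - 1) → ℝ),
      (∀ j, Convex ℝ (U j)) ∧
      ∀ σ : Finset (Fin n), σ.Nonempty →
        (((⋂ j ∈ σ, U j) \ ⋃ l ∈ σᶜ, U l).Nonempty ↔ ∃ i, σ = σs i) := by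
  classical
  refine ⟨fun j => {x | (∀ m, 0 ≤ x m) ∧ ∃ i : Fin k, (i : ℕ) = leadIdx x ∧ j ∈ σs i},
    ?_, ?_⟩
  · -- convexity
    intro j x hx y hy a b ha hb hab
    rcases ha.eq_or_lt with rfl | ha'
    · have hb1 : b = 1 := by linarith
      simpa [hb1] using hy
    rcases hb.eq_or_lt with rfl | hb'
    · have ha1 : a = 1 := by linarith
      simpa [ha1] using hx
    obtain ⟨hx0, ix, hix, hjx⟩ := hx
    obtain ⟨hy0, iy, hiy, hjy⟩ := hy
    refine ⟨fun m => add_nonneg (mul_nonneg ha'.le (hx0 m)) (mul_nonneg hb'.le (hy0 m)), ?_⟩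
    have hc := leadIdx_combo hx0 hy0 ha' hb'
    rcases min_cases (leadIdx x) (leadIdx y) with ⟨h1, _⟩ | ⟨h1, _⟩
    · exact ⟨ix, by rw [hc, h1]; exact hix, hjx⟩
    · exact ⟨iy, by rw [hc, h1]; exact hiy, hjy⟩
  · intro σ hσ
    constructor
    · rintro ⟨x, hx1, hx2⟩
      rw [Set.mem_iInter₂] at hx1
      obtain ⟨j₀, hj₀⟩ := hσ
      obtain ⟨hx0, i, hival, _⟩ := hx1 j₀ hj₀
      refine ⟨i, ?_⟩
      ext j
      constructor
      · intro hj
        obtain ⟨_, i', hi'val, hji'⟩ := hx1 j hj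
        have hii : i' = i := Fin.ext (by omega)
        rwa [hii] at hji'
      · intro hj
        by_contra hjσ
        exact hx2 (Set.mem_iUnion₂.mpr ⟨j, Finset.mem_compl.mpr hjσ, hx0, i, hival, hj⟩)
    · rintro ⟨i, rfl⟩
      refine ⟨fun m => if (m : ℕ) = (i : ℕ) then 1 else 0, ?_, ?_⟩
      · rw [Set.mem_iInter₂]
        intro j hj
        exact ⟨fun m => by dsimp only; split <;> norm_num, i, (leadIdx_single i).symm, hj⟩
      · intro hmem
        rw [Set.mem_iUnion₂] at hmem
        obtain ⟨l, hl, _, i', hi'val, hli'⟩ := hmem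
        have hii : i' = i := Fin.ext (by rw [hi'val, leadIdx_single])
        rw [hii] at hli'
        exact (Finset.mem_compl.mp hl) hli'
end

section
/- The code C_n = { σ ⊆ {1,...,n} : |σ| = n−1 } has no convex realization in ℝ^k for any k ≤ n − 2. That is, there do not exist convex sets U_1, ..., U_n ⊆ ℝ^k such that every intersection of n−1 of the sets contains a point avoiding the remaining set, while ⋂_{i=1}^n U_i = ∅. -/
open Set

theorem Cn_not_realizable_low_dim (n k : ℕ) (hn : 2 ≤ n) (hk : k + 2 ≤ n) :
    ¬ ∃ U : Fin n → Set (Fin k → ℝ),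
        (∀ i, Convex ℝ (U i)) ∧
        (∀ i : Fin n, ((⋂ j ∈ ({i}ᶜ : Finset (Fin n)), U j) \ U i).Nonempty) ∧
        (⋂ i, U i) = ∅ := by
  rintro ⟨U, hconv, hne, hempty⟩
  have hrank : Module.finrank ℝ (Fin k → ℝ) = k := by simp
  have h : (⋂ i ∈ (Finset.univ : Finset (Fin n)), U i).Nonempty := by
    apply Convex.helly_theorem (𝕜 := ℝ)
    · rw [hrank]; simp [Finset.card_univ]; omega
    · exact fun i _ => hconv i
    · intro I _ hIcard
      have hlt : I.card < n := by rw [hIcard, hrank]; omega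
      obtain ⟨i, hi⟩ : ∃ i : Fin n, i ∉ I := by
        by_contra hc
        push_neg at hc
        have : (Finset.univ : Finset (Fin n)) ⊆ I := fun x _ => hc x
        have := Finset.card_le_card this
        simp [Finset.card_univ] at this
        omega
      obtain ⟨x, hx, -⟩ := hne i
      refine ⟨x, ?_⟩
      simp only [Set.mem_iInter₂] at hx ⊢
      intro j hj
      exact hx j (by simp [Finset.mem_compl]; rintro rfl; exact hi hj)
  rw [show (⋂ i ∈ (Finset.univ : Finset (Fin n)), U i) = ⋂ i, U i by simp] at h
  rw [hempty] at h
  exact h.ne_empty rfl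
end

section
/- The minimal convex embedding dimension of C_n = { σ ⊆ {1,...,n} : |σ| = n−1 } is exactly n − 1: it has a convex realization in ℝ^{n−1} but none in ℝ^{n−2}. -/
open Set

/-- `C` is convex realizable in ℝ^d with some stimulus space `X`. -/
def Realizes (n d : ℕ) (C : Set (Finset (Fin n))) : Prop :=
  ∃ (X : Set (Fin d → ℝ)) (U : Fin n → Set (Fin d → ℝ)),
    (∀ i, Convex ℝ (U i) ∧ U i ⊆ X) ∧
    ∀ σ : Finset (Fin n),
      (σ ∈ C ↔ ((X ∩ ⋂ j ∈ σ, U j) \ ⋃ l ∈ σᶜ, U l).Nonempty)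

namespace CnAux

variable {m : ℕ}

/-- `x` is lexicographically positive with leading index at least `i`. -/
def LexPos (i : ℕ) (x : Fin m → ℝ) : Prop :=
  ∃ j : Fin m, i ≤ (j : ℕ) ∧ 0 < x j ∧ ∀ k : Fin m, (j : ℕ) < (k : ℕ) → x k = 0

lemma LexPos.mono {i i' : ℕ} {x : Fin m → ℝ} (h : i' ≤ i) (hx : LexPos i x) :
    LexPos i' x := by
  obtain ⟨j, hij, hj, ht⟩ := hx
  exact ⟨j, le_trans h hij, hj, ht⟩

lemma LexPos.smul {i : ℕ} {x : Fin m → ℝ} {a : ℝ} (ha : 0 < a) (hx : LexPos i x) :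
    LexPos i (a • x) := by
  obtain ⟨j, hij, hj, ht⟩ := hx
  refine ⟨j, hij, ?_, fun k hk => ?_⟩
  · simpa using mul_pos ha hj
  · simp [ht k hk]

lemma LexPos.add_right {i : ℕ} {x y : Fin m → ℝ} (hx : LexPos i x)
    (hy : ∀ k : Fin m, i ≤ (k : ℕ) → y k = 0) : LexPos i (x + y) := by
  obtain ⟨j, hij, hj, ht⟩ := hx
  refine ⟨j, hij, ?_, fun k hk => ?_⟩
  · simpa [hy j hij] using hj
  · simp [ht k hk, hy k (le_trans hij (le_of_lt hk))]

lemma LexPos.add {i : ℕ} {x y : Fin m → ℝ} (hx : LexPos i x) (hy : LexPos i y) :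
    LexPos i (x + y) := by
  obtain ⟨j₁, hij₁, hj₁, ht₁⟩ := hx
  obtain ⟨j₂, hij₂, hj₂, ht₂⟩ := hy
  rcases lt_trichotomy ((j₁ : ℕ)) ((j₂ : ℕ)) with h | h | h
  · refine ⟨j₂, hij₂, ?_, fun k hk => ?_⟩
    · simpa [ht₁ j₂ h] using hj₂
    · simp [ht₁ k (lt_trans h hk), ht₂ k hk]
  · have hjj : j₁ = j₂ := Fin.ext h
    subst hjj
    refine ⟨j₁, hij₁, ?_, fun k hk => ?_⟩
    · simpa using add_pos hj₁ hj₂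
    · simp [ht₁ k hk, ht₂ k hk]
  · refine ⟨j₁, hij₁, ?_, fun k hk => ?_⟩
    · simpa [ht₂ j₁ h] using hj₁
    · simp [ht₁ k hk, ht₂ k (lt_trans h hk)]

lemma not_lexPos_zero (i : ℕ) : ¬ LexPos i (0 : Fin m → ℝ) := by
  rintro ⟨j, -, hj, -⟩
  simp at hj

/-- The convex region missed exactly by the codewords whose complement is `{i}`. -/
def Uset (m i : ℕ) : Set (Fin m → ℝ) :=
  {x | LexPos i x ∨ (i ≠ 0 ∧ (∀ k : Fin m, i - 1 ≤ (k : ℕ) → x k = 0) ∧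
        (x = 0 ∨ LexPos 0 x))}

/-- The stimulus space: the lexicographically nonnegative vectors. -/
def XS (m : ℕ) : Set (Fin m → ℝ) := {x | x = 0 ∨ LexPos 0 x}

lemma Uset_subset (i : ℕ) : Uset m i ⊆ XS m := by
  rintro x (h | ⟨-, -, h⟩)
  · exact Or.inr (h.mono (Nat.zero_le i))
  · exact h

lemma convex_Uset (i : ℕ) : Convex ℝ (Uset m i) := by
  intro x hx y hy a b ha hb hab
  rcases eq_or_lt_of_le ha with ha0 | hpa
  · have hb1 : b = 1 := by linarith
    simpa [← ha0, hb1] using hy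
  rcases eq_or_lt_of_le hb with hb0 | hpb
  · have ha1 : a = 1 := by linarith
    simpa [← hb0, ha1] using hx
  rcases hx with hx | ⟨hi0, hxt, hxX⟩ <;> rcases hy with hy | ⟨hi0', hyt, hyX⟩
  · exact Or.inl ((hx.smul hpa).add (hy.smul hpb))
  · refine Or.inl ((hx.smul hpa).add_right fun k hk => ?_)
    simp [hyt k (le_trans (Nat.sub_le i 1) hk)]
  · refine Or.inl ?_
    rw [add_comm]
    refine (hy.smul hpb).add_right fun k hk => ?_
    simp [hxt k (le_trans (Nat.sub_le i 1) hk)]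
  · refine Or.inr ⟨hi0, fun k hk => ?_, ?_⟩
    · simp [hxt k hk, hyt k hk]
    · rcases hxX with rfl | hx0 <;> rcases hyX with rfl | hy0
      · exact Or.inl (by simp)
      · exact Or.inr (by simpa using hy0.smul hpb)
      · exact Or.inr (by simpa using hx0.smul hpa)
      · exact Or.inr ((hx0.smul hpa).add (hy0.smul hpb))

lemma zero_mem_Uset_iff (i : ℕ) : (0 : Fin m → ℝ) ∈ Uset m i ↔ i ≠ 0 := by
  constructor
  · rintro (h | ⟨h, -, -⟩)
    · exact absurd h (not_lexPos_zero i)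
    · exact h
  · intro h
    exact Or.inr ⟨h, fun k _ => rfl, Or.inl rfl⟩

lemma lead_mem_Uset_iff {x : Fin m → ℝ} {j : Fin m} (hj : 0 < x j)
    (ht : ∀ k : Fin m, (j : ℕ) < (k : ℕ) → x k = 0) (i : ℕ) :
    x ∈ Uset m i ↔ i ≠ (j : ℕ) + 1 := by
  constructor
  · rintro (⟨j', hij', hj', ht'⟩ | ⟨hi0, hxt, -⟩) heq
    · have : x j' = 0 := ht j' (by omega)
      linarith
    · have : x j = 0 := hxt j (by omega)
      linarith
  · intro hne
    rcases Nat.lt_or_ge ((j : ℕ)) i with h | h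
    · refine Or.inr ⟨by omega, fun k hk => ht k (by omega), Or.inr ⟨j, Nat.zero_le _, hj, ht⟩⟩
    · exact Or.inl ⟨j, h, hj, ht⟩

end CnAux

open CnAux

theorem Cn_min_embedding_dim (n : ℕ) (hn : 2 ≤ n) :
    Realizes n (n - 1) {σ | σ.card = n - 1} ∧
    ¬ Realizes n (n - 2) {σ | σ.card = n - 1} := by
  constructor
  · -- realization in dimension n - 1
    refine ⟨XS (n - 1), fun i => Uset (n - 1) (i : ℕ), fun i =>
      ⟨convex_Uset _, Uset_subset _⟩, fun σ => ?_⟩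
    -- characterize membership of any point in the atom
    have hcompl : ∀ (c : ℕ) (hc : c < n),
        (∀ x : Fin (n - 1) → ℝ, x ∈ XS (n - 1) →
          (∀ l : Fin n, x ∈ Uset (n - 1) (l : ℕ) ↔ (l : ℕ) ≠ c) →
          ((σ : Finset (Fin n))ᶜ = {(⟨c, by omega⟩ : Fin n)} →
            x ∈ (XS (n - 1) ∩ ⋂ j ∈ σ, Uset (n - 1) (j : ℕ)) \
              ⋃ l ∈ σᶜ, Uset (n - 1) (l : ℕ))) := by
      intro c hc x hxX hchar hσ
      refine ⟨⟨hxX, ?_⟩, ?_⟩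
      · refine Set.mem_iInter₂.mpr fun j hj => (hchar j).mpr fun hval => ?_
        have : j ∈ σᶜ := by
          rw [hσ, Finset.mem_singleton]
          exact Fin.ext hval
        exact (Finset.mem_compl.mp this) hj
      · intro hmem
        simp only [Set.mem_iUnion] at hmem
        obtain ⟨l, hl, hxl⟩ := hmem
        rw [hσ, Finset.mem_singleton] at hl
        subst hl
        exact (hchar _).mp hxl rfl
    constructor
    · -- card = n-1 → nonempty atom
      intro hcard
      simp only [Set.mem_setOf_eq] at hcard
      have hcc : σᶜ.card = 1 := by
        rw [Finset.card_compl, Fintype.card_fin, hcard]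
        omega
      obtain ⟨i, hi⟩ := Finset.card_eq_one.mp hcc
      rcases Nat.eq_zero_or_pos (i : ℕ) with hi0 | hipos
      · refine ⟨0, hcompl (i : ℕ) i.isLt 0 (Or.inl rfl)
          (fun l => by rw [zero_mem_Uset_iff, hi0]) ?_⟩
        rw [hi]
      · have hilt : (i : ℕ) - 1 < n - 1 := by have := i.isLt; omega
        set j : Fin (n - 1) := ⟨(i : ℕ) - 1, hilt⟩ with hj
        set x : Fin (n - 1) → ℝ := fun k => if k = j then 1 else 0 with hx
        have hxj : 0 < x j := by simp [hx]
        have hxt : ∀ k : Fin (n - 1), (j : ℕ) < (k : ℕ) → x k = 0 := by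
          intro k hk
          have : k ≠ j := fun h => by subst h; omega
          simp [hx, this]
        refine ⟨x, hcompl (i : ℕ) i.isLt x (Or.inr ⟨j, Nat.zero_le _, hxj, hxt⟩)
          (fun l => by rw [lead_mem_Uset_iff hxj hxt]; simp [hj]; omega) ?_⟩
        rw [hi]
    · -- nonempty atom → card = n-1
      rintro ⟨x, ⟨hxX, hxI⟩, hxU⟩
      simp only [Set.mem_iUnion] at hxU
      push_neg at hxU
      rw [Set.mem_iInter₂] at hxI
      have hmemiff : ∀ l : Fin n, l ∈ σ ↔ x ∈ Uset (n - 1) (l : ℕ) := by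
        intro l
        constructor
        · exact hxI l
        · intro hmem
          by_contra hl
          exact hxU l (Finset.mem_compl.mpr hl) hmem
      -- find the unique missing index
      have key : ∃ i : Fin n, ∀ l : Fin n, x ∈ Uset (n - 1) (l : ℕ) ↔ l ≠ i := by
        rcases hxX with rfl | ⟨j, -, hj, ht⟩
        · refine ⟨⟨0, by omega⟩, fun l => ?_⟩
          rw [zero_mem_Uset_iff]
          constructor
          · intro h he; subst he; exact h rfl
          · intro h hv; exact h (Fin.ext hv)
        · refine ⟨⟨(j : ℕ) + 1, by have := j.isLt; omega⟩, fun l => ?_⟩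
          rw [lead_mem_Uset_iff hj ht]
          constructor
          · intro h he; subst he; exact h rfl
          · intro h hv; exact h (Fin.ext hv)
      obtain ⟨i, hi⟩ := key
      have hσc : σᶜ = {i} := by
        ext l
        rw [Finset.mem_compl, Finset.mem_singleton]
        constructor
        · intro hl
          by_contra hne
          exact hl ((hmemiff l).mpr ((hi l).mpr hne))
        · rintro rfl
          intro hl
          exact (hi l).mp ((hmemiff l).mp hl) rfl
      have h1 : σᶜ.card = 1 := by rw [hσc]; simp
      rw [Finset.card_compl, Fintype.card_fin] at h1
      have hle : σ.card ≤ n := by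
        simpa [Fintype.card_fin] using Finset.card_le_univ σ
      simp only [Set.mem_setOf_eq]
      omega
  · -- no realization in dimension n - 2
    rintro ⟨X, U, hU, hcode⟩
    have hdim : Module.finrank ℝ (Fin (n - 2) → ℝ) = n - 2 := Module.finrank_fin_fun ℝ
    have hhelly : (⋂ i ∈ (Finset.univ : Finset (Fin n)), U i).Nonempty := by
      apply Convex.helly_theorem' (fun i _ => (hU i).1)
      intro I _ hIcard
      rw [hdim] at hIcard
      -- find an index outside I
      have hInotuniv : I ≠ Finset.univ := by
        intro h
        rw [h, Finset.card_univ, Fintype.card_fin] at hIcard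
        omega
      obtain ⟨i₀, hi₀⟩ : ∃ i₀, i₀ ∉ I := by
        by_contra h
        push_neg at h
        exact hInotuniv (Finset.eq_univ_iff_forall.mpr h)
      have hσ : ({i₀}ᶜ : Finset (Fin n)) ∈ {σ : Finset (Fin n) | σ.card = n - 1} := by
        simp only [Set.mem_setOf_eq, Finset.card_compl, Fintype.card_fin,
          Finset.card_singleton]
      obtain ⟨x, ⟨hxX, hxI⟩, -⟩ := (hcode _).mp hσ
      rw [Set.mem_iInter₂] at hxI
      refine ⟨x, Set.mem_iInter₂.mpr fun i hiI => ?_⟩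
      refine hxI i (Finset.mem_compl.mpr ?_)
      simp only [Finset.mem_singleton]
      rintro rfl
      exact hi₀ hiI
    obtain ⟨q, hq⟩ := hhelly
    rw [Set.mem_iInter₂] at hq
    have hqX : q ∈ X := (hU ⟨0, by omega⟩).2 (hq _ (Finset.mem_univ _))
    have : (Finset.univ : Finset (Fin n)) ∈ {σ : Finset (Fin n) | σ.card = n - 1} := by
      refine (hcode Finset.univ).mpr ⟨q, ⟨hqX, Set.mem_iInter₂.mpr fun j _ => hq j (Finset.mem_univ j)⟩, ?_⟩
      simp
    simp only [Set.mem_setOf_eq, Finset.card_univ, Fintype.card_fin] at this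
    omega
end

section
/- For every d ∈ ℕ, there exists a binary code whose minimal convex embedding dimension exceeds d. In particular, the minimal convex embedding dimension over all binary codes is unbounded. -/
open Set

/-- The boundary-of-simplex code (all nonempty proper subsets) is realizable in ℝⁿ. -/
lemma realizes_boundary (n : ℕ) :
    Realizes n n {σ : Finset (Fin n) | σ ≠ ∅ ∧ σ ≠ Finset.univ} := by
  classical
  refine ⟨{x : Fin n → ℝ | (∀ i, 0 ≤ x i) ∧ (∑ i, x i = 1) ∧ ∃ i, x i = 0},
    fun i => {x : Fin n → ℝ | (∀ j, 0 ≤ x j) ∧ (∑ j, x j = 1) ∧ x i = 0}, ?_, ?_⟩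
  · intro i
    constructor
    · intro x hx y hy a b ha hb hab
      refine ⟨fun j => add_nonneg (mul_nonneg ha (hx.1 j)) (mul_nonneg hb (hy.1 j)), ?_, ?_⟩
      · simp only [Pi.add_apply, Pi.smul_apply, smul_eq_mul]
        rw [Finset.sum_add_distrib, ← Finset.mul_sum, ← Finset.mul_sum, hx.2.1, hy.2.1]
        simpa using hab
      · simp [hx.2.2, hy.2.2]
    · intro x hx
      exact ⟨hx.1, hx.2.1, ⟨i, hx.2.2⟩⟩
  · intro σ
    constructor
    · rintro ⟨hne, hnu⟩
      obtain ⟨i0, hi0⟩ := Finset.nonempty_iff_ne_empty.2 hne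
      have hcne : σᶜ.Nonempty := by
        rw [← Finset.card_pos, Finset.card_compl]
        have := Finset.card_lt_card (Finset.ssubset_univ_iff.2 hnu)
        simp only [Finset.card_univ, Fintype.card_fin] at this ⊢
        omega
      have hcpos : (0 : ℝ) < (σᶜ.card : ℝ) := by
        exact_mod_cast Finset.card_pos.2 hcne
      set x : Fin n → ℝ := fun j => if j ∈ σ then 0 else (σᶜ.card : ℝ)⁻¹ with hxdef
      have hxnn : ∀ j, 0 ≤ x j := by
        intro j; simp only [hxdef]
        split
        · exact le_refl 0
        · positivity
      have hxsum : ∑ j, x j = 1 := by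
        have h1 : ∑ j, x j = ∑ j ∈ σᶜ, x j := by
          refine (Finset.sum_subset (Finset.subset_univ _) ?_).symm
          intro j _ hj
          simp only [hxdef]
          rw [if_pos (by simpa using hj)]
        rw [h1, Finset.sum_congr rfl (fun j hj => ?_)]
        · rw [Finset.sum_const, nsmul_eq_mul, mul_inv_cancel₀ (ne_of_gt hcpos)]
        · show x j = (σᶜ.card : ℝ)⁻¹
          simp only [hxdef]
          rw [if_neg (Finset.mem_compl.1 hj)]
      refine ⟨x, ⟨⟨hxnn, hxsum, ⟨i0, if_pos hi0⟩⟩, ?_⟩, ?_⟩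
      · exact Set.mem_biInter fun j hj => ⟨hxnn, hxsum, if_pos hj⟩
      · intro hx
        obtain ⟨l, hl, hxl⟩ := Set.mem_iUnion₂.1 hx
        have h0 : x l = 0 := hxl.2.2
        have : x l = (σᶜ.card : ℝ)⁻¹ := by
          simp only [hxdef]; rw [if_neg (Finset.mem_compl.1 hl)]
        rw [this] at h0
        exact absurd h0 (by positivity)
    · rintro ⟨x, ⟨⟨⟨hnn, hsum, hi⟩, hin⟩, hout⟩⟩
      constructor
      · rintro rfl
        obtain ⟨i, hi0⟩ := hi
        exact hout (Set.mem_iUnion₂.2 ⟨i, by simp, ⟨hnn, hsum, hi0⟩⟩)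
      · rintro rfl
        have hz : ∀ j, x j = 0 := fun j =>
          (Set.mem_iInter₂.1 hin j (Finset.mem_univ j)).2.2
        rw [Finset.sum_congr rfl (fun j _ => hz j)] at hsum
        simp at hsum

theorem embedding_dim_unbounded (d : ℕ) :
    ∃ (n : ℕ) (C : Set (Finset (Fin n))),
      (∃ e, Realizes n e C) ∧ ∀ e ≤ d, ¬ Realizes n e C := by
  classical
  refine ⟨d + 2, {σ : Finset (Fin (d + 2)) | σ ≠ ∅ ∧ σ ≠ Finset.univ},
    ⟨d + 2, realizes_boundary (d + 2)⟩, ?_⟩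
  rintro e he ⟨X, U, hU, hatoms⟩
  -- every (n-1)-wise intersection is nonempty
  have hwit : ∀ i : Fin (d + 2), (⋂ j ∈ ({i}ᶜ : Finset (Fin (d + 2))), U j).Nonempty := by
    intro i
    have hmem : ({i}ᶜ : Finset (Fin (d + 2))) ∈
        {σ : Finset (Fin (d + 2)) | σ ≠ ∅ ∧ σ ≠ Finset.univ} := by
      constructor
      · rw [← Finset.nonempty_iff_ne_empty, ← Finset.card_pos, Finset.card_compl]
        simp
      · intro h
        have : i ∈ ({i}ᶜ : Finset (Fin (d + 2))) := h ▸ Finset.mem_univ i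
        simp at this
    obtain ⟨x, hx⟩ := (hatoms _).1 hmem
    exact ⟨x, hx.1.2⟩
  -- total intersection is empty
  have htot : ¬ (⋂ j, U j).Nonempty := by
    rintro ⟨x, hx⟩
    have hxX : x ∈ X := (hU 0).2 (Set.mem_iInter.1 hx 0)
    have hm : (Finset.univ : Finset (Fin (d + 2))) ∈
        {σ : Finset (Fin (d + 2)) | σ ≠ ∅ ∧ σ ≠ Finset.univ} := by
      apply (hatoms _).2
      refine ⟨x, ⟨hxX, Set.mem_biInter fun j _ => Set.mem_iInter.1 hx j⟩, ?_⟩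
      simp
    exact hm.2 rfl
  -- Helly's theorem gives a contradiction
  apply htot
  have hfr : Module.finrank ℝ (Fin e → ℝ) = e := by simp
  have key := Convex.helly_theorem' (𝕜 := ℝ) (F := U) (s := Finset.univ)
    (fun i _ => (hU i).1) ?_
  · obtain ⟨x, hx⟩ := key
    exact ⟨x, Set.mem_iInter.2 fun j => Set.mem_iInter₂.1 hx j (Finset.mem_univ j)⟩
  · intro I hIss hIcard
    rw [hfr] at hIcard
    have hne : ∃ i, i ∉ I := by
      by_contra h
      push_neg at h
      have huniv : I = Finset.univ := Finset.eq_univ_iff_forall.2 h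
      rw [huniv, Finset.card_univ, Fintype.card_fin] at hIcard
      omega
    obtain ⟨i, hi⟩ := hne
    obtain ⟨x, hx⟩ := hwit i
    refine ⟨x, Set.mem_biInter fun j hj => ?_⟩
    have hji : j ∈ ({i}ᶜ : Finset (Fin (d + 2))) := by
      simp only [Finset.mem_compl, Finset.mem_singleton]
      rintro rfl; exact hi hj
    exact Set.mem_iInter₂.1 hx j hji
end

section
/- Let A = conv{v_0, ..., v_m} be a simplex in ℝ^d with facet F = conv{v_0, ..., v_{m−1}}, let B ⊆ F be convex, and let S = A \ F. Then B ∪ S is convex. -/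
open Set

private lemma mem_convexHull_range_iff' {d n : ℕ} (p : Fin n → (Fin d → ℝ))
    (x : Fin d → ℝ) :
    x ∈ convexHull ℝ (Set.range p) ↔
      ∃ w : Fin n → ℝ, (∀ i, 0 ≤ w i) ∧ ∑ i, w i = 1 ∧ ∑ i, w i • p i = x := by
  rw [convexHull_range_eq_exists_affineCombination]
  constructor
  · rintro ⟨s, w, h0, h1, rfl⟩
    refine ⟨Set.indicator ↑s w, ?_, ?_, ?_⟩
    · intro i
      by_cases hi : i ∈ s
      · simp [Set.indicator_apply, hi, h0 i hi]
      · simp [Set.indicator_apply, hi]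
    · rw [← Finset.sum_indicator_subset w (Finset.subset_univ s)] at h1
      exact h1
    · have h1' : ∑ i, Set.indicator (↑s) w i = 1 := by
        rw [← Finset.sum_indicator_subset w (Finset.subset_univ s)] at h1
        exact h1
      rw [Finset.affineCombination_indicator_subset w p (Finset.subset_univ s),
        Finset.affineCombination_eq_linear_combination _ _ _ h1']
  · rintro ⟨w, h0, h1, rfl⟩
    exact ⟨Finset.univ, w, fun i _ => h0 i, h1,
      by rw [Finset.affineCombination_eq_linear_combination _ _ _ h1]⟩

private lemma image_lt_eq_range {d m : ℕ} (v : Fin (m + 1) → (Fin d → ℝ)) :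
    v '' {i | (i : ℕ) < m} = Set.range (fun j : Fin m => v j.castSucc) := by
  ext x
  constructor
  · rintro ⟨i, hi, rfl⟩
    exact ⟨⟨i, hi⟩, rfl⟩
  · rintro ⟨j, rfl⟩
    exact ⟨j.castSucc, j.isLt, rfl⟩

private lemma memF_iff {d m : ℕ} (v : Fin (m + 1) → (Fin d → ℝ)) (x : Fin d → ℝ) :
    x ∈ convexHull ℝ (v '' {i | (i : ℕ) < m}) ↔
      ∃ w : Fin (m + 1) → ℝ, (∀ i, 0 ≤ w i) ∧ ∑ i, w i = 1 ∧ w (Fin.last m) = 0 ∧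
        ∑ i, w i • v i = x := by
  rw [image_lt_eq_range, mem_convexHull_range_iff']
  constructor
  · rintro ⟨u, h0, h1, rfl⟩
    refine ⟨fun i => if h : (i : ℕ) < m then u ⟨i, h⟩ else 0, ?_, ?_, ?_, ?_⟩
    · intro i
      by_cases h : (i : ℕ) < m
      · simp [h, h0]
      · simp [h]
    · rw [Fin.sum_univ_castSucc]
      simp [Fin.is_lt]
      exact h1
    · simp
    · rw [Fin.sum_univ_castSucc]
      simp [Fin.is_lt]
  · rintro ⟨w, h0, h1, hlast, rfl⟩
    refine ⟨fun j => w j.castSucc, fun j => h0 _, ?_, ?_⟩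
    · rw [Fin.sum_univ_castSucc] at h1
      simpa [hlast] using h1
    · rw [Fin.sum_univ_castSucc]
      simp [hlast]

private lemma weights_unique {d m : ℕ} {v : Fin (m + 1) → (Fin d → ℝ)}
    (hv : AffineIndependent ℝ v) {w u : Fin (m + 1) → ℝ}
    (hw : ∑ i, w i = 1) (hu : ∑ i, u i = 1)
    (h : ∑ i, w i • v i = ∑ i, u i • v i) : w = u := by
  refine (affineIndependent_iff_eq_of_fintype_affineCombination_eq ℝ v).1 hv w u hw hu ?_
  rw [Finset.affineCombination_eq_linear_combination _ _ _ hw,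
    Finset.affineCombination_eq_linear_combination _ _ _ hu]
  exact h

private lemma memS_iff {d m : ℕ} {v : Fin (m + 1) → (Fin d → ℝ)}
    (hv : AffineIndependent ℝ v) (x : Fin d → ℝ) :
    x ∈ convexHull ℝ (Set.range v) \ convexHull ℝ (v '' {i | (i : ℕ) < m}) ↔
      ∃ w : Fin (m + 1) → ℝ, (∀ i, 0 ≤ w i) ∧ ∑ i, w i = 1 ∧ 0 < w (Fin.last m) ∧
        ∑ i, w i • v i = x := by
  constructor
  · rintro ⟨hA, hF⟩
    obtain ⟨w, h0, h1, hx⟩ := (mem_convexHull_range_iff' v x).1 hA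
    refine ⟨w, h0, h1, ?_, hx⟩
    rcases lt_or_eq_of_le (h0 (Fin.last m)) with h | h
    · exact h
    · exact absurd ((memF_iff v x).2 ⟨w, h0, h1, h.symm, hx⟩) hF
  · rintro ⟨w, h0, h1, hpos, hx⟩
    refine ⟨(mem_convexHull_range_iff' v x).2 ⟨w, h0, h1, hx⟩, ?_⟩
    intro hF
    obtain ⟨u, hu0, hu1, hulast, hux⟩ := (memF_iff v x).1 hF
    have := weights_unique hv h1 hu1 (by rw [hx, hux])
    rw [this, hulast] at hpos
    exact lt_irrefl 0 hpos

theorem union_with_simplex_minus_facet_convex (d m : ℕ)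
    (v : Fin (m + 1) → (Fin d → ℝ)) (hv : AffineIndependent ℝ v)
    (B : Set (Fin d → ℝ)) (hB : Convex ℝ B)
    (hBF : B ⊆ convexHull ℝ (v '' {i | (i : ℕ) < m})) :
    Convex ℝ (B ∪
      (convexHull ℝ (Set.range v) \ convexHull ℝ (v '' {i | (i : ℕ) < m}))) := by
  intro x hx y hy a b ha hb hab
  -- helper: combine two representations
  have comb : ∀ (wx wy : Fin (m + 1) → ℝ),
      (∑ i, wx i • v i = x) → (∑ i, wy i • v i = y) →
      ∑ i, (a * wx i + b * wy i) • v i = a • x + b • y := by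
    intro wx wy hwx hwy
    rw [← hwx, ← hwy, Finset.smul_sum, Finset.smul_sum, ← Finset.sum_add_distrib]
    refine Finset.sum_congr rfl fun i _ => ?_
    rw [add_smul, smul_smul, smul_smul]
  have sum1 : ∀ (wx wy : Fin (m + 1) → ℝ),
      (∑ i, wx i = 1) → (∑ i, wy i = 1) →
      ∑ i, (a * wx i + b * wy i) = 1 := by
    intro wx wy h1 h2
    rw [Finset.sum_add_distrib, ← Finset.mul_sum, ← Finset.mul_sum, h1, h2,
      mul_one, mul_one, hab]
  rcases hx with hxB | hxS
  · rcases hy with hyB | hyS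
    · exact Or.inl (hB hxB hyB ha hb hab)
    · -- x ∈ B ⊆ F, y ∈ S
      rcases eq_or_lt_of_le hb with hb0 | hbpos
      · have : a = 1 := by linarith
        rw [← hb0, this]
        simpa using Or.inl hxB
      · obtain ⟨wx, hx0, hx1, hxlast, hxr⟩ := (memF_iff v x).1 (hBF hxB)
        obtain ⟨wy, hy0, hy1, hylast, hyr⟩ := (memS_iff hv y).1 hyS
        refine Or.inr ((memS_iff hv _).2 ⟨fun i => a * wx i + b * wy i,
          fun i => add_nonneg (mul_nonneg ha (hx0 i)) (mul_nonneg hb (hy0 i)),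
          sum1 _ _ hx1 hy1, ?_, comb _ _ hxr hyr⟩)
        show 0 < a * wx (Fin.last m) + b * wy (Fin.last m)
        have : 0 < b * wy (Fin.last m) := mul_pos hbpos hylast
        nlinarith [mul_nonneg ha (hx0 (Fin.last m))]
  · rcases hy with hyB | hyS
    · rcases eq_or_lt_of_le ha with ha0 | hapos
      · have : b = 1 := by linarith
        rw [← ha0, this]
        simpa using Or.inl hyB
      · obtain ⟨wy, hy0, hy1, hylast, hyr⟩ := (memF_iff v y).1 (hBF hyB)
        obtain ⟨wx, hx0, hx1, hxlast, hxr⟩ := (memS_iff hv x).1 hxS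
        refine Or.inr ((memS_iff hv _).2 ⟨fun i => a * wx i + b * wy i,
          fun i => add_nonneg (mul_nonneg ha (hx0 i)) (mul_nonneg hb (hy0 i)),
          sum1 _ _ hx1 hy1, ?_, comb _ _ hxr hyr⟩)
        show 0 < a * wx (Fin.last m) + b * wy (Fin.last m)
        have : 0 < a * wx (Fin.last m) := mul_pos hapos hxlast
        nlinarith [mul_nonneg hb (hy0 (Fin.last m))]
    · obtain ⟨wx, hx0, hx1, hxlast, hxr⟩ := (memS_iff hv x).1 hxS
      obtain ⟨wy, hy0, hy1, hylast, hyr⟩ := (memS_iff hv y).1 hyS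
      refine Or.inr ((memS_iff hv _).2 ⟨fun i => a * wx i + b * wy i,
        fun i => add_nonneg (mul_nonneg ha (hx0 i)) (mul_nonneg hb (hy0 i)),
        sum1 _ _ hx1 hy1, ?_, comb _ _ hxr hyr⟩)
      show 0 < a * wx (Fin.last m) + b * wy (Fin.last m)
      rcases eq_or_lt_of_le ha with ha0 | hapos
      · have hb1 : b = 1 := by linarith
        nlinarith
      · nlinarith [mul_nonneg hb (hy0 (Fin.last m))]
end

section
/- Let C be a code on n neurons realized in ℝ¹ by intervals I_1, ..., I_n (each convex, i.e., an interval, not necessarily open or closed), and suppose no two distinct interval endpoints coincide unless equal. Define ε as the smallest nonzero distance between any two endpoints, and for each k let I_k' be the open interval obtained by moving each closed endpoint of I_k outward by ε/3 and each open endpoint inward by ε/3. Then for any codeword σ realized by the I_k over a subinterval of positive length, σ is also realized by the open intervals I_k'. -/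
open Set

theorem positive_length_codewords_preserved (n : ℕ)
    (a b : Fin n → ℝ) (ca cb : Fin n → Bool) (ε : ℝ) (hε : 0 < ε)
    (hmin : ∀ p ∈ Set.range a ∪ Set.range b, ∀ q ∈ Set.range a ∪ Set.range b,
      p ≠ q → ε ≤ |p - q|)
    (I : Fin n → Set ℝ)
    (hI : ∀ k, I k = {x : ℝ |
      (if ca k then a k ≤ x else a k < x) ∧ (if cb k then x ≤ b k else x < b k)})
    (I' : Fin n → Set ℝ)
    (hI' : ∀ k, I' k = Set.Ioo (if ca k then a k - ε / 3 else a k + ε / 3)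
      (if cb k then b k + ε / 3 else b k - ε / 3))
    (σ : Finset (Fin n)) (c d : ℝ) (hcd : c < d)
    (hsub : Set.Ioo c d ⊆ (⋂ j ∈ σ, I j) \ ⋃ l ∈ σᶜ, I l) :
    ((⋂ j ∈ σ, I' j) \ ⋃ l ∈ σᶜ, I' l).Nonempty := by
  classical
  set R : Set ℝ := Set.range a ∪ Set.range b with hR
  have hIexp : ∀ k (x : ℝ), x ∈ I k ↔
      ((if ca k then a k ≤ x else a k < x) ∧ (if cb k then x ≤ b k else x < b k)) := by
    intro k x; simp only [hI k, Set.mem_setOf_eq]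
  set L' : Fin n → ℝ := fun k => if ca k then a k - ε/3 else a k + ε/3 with hL'def
  set U' : Fin n → ℝ := fun k => if cb k then b k + ε/3 else b k - ε/3 with hU'def
  have hI'2 : ∀ k, I' k = Set.Ioo (L' k) (U' k) := by
    intro k; rw [hI' k]
  -- points in Ioo c d belong to all I j, j ∈ σ
  have hmemσ : ∀ j ∈ σ, ∀ x ∈ Set.Ioo c d, x ∈ I j := by
    intro j hj x hx
    have h1 := (hsub hx).1
    simp only [Set.mem_iInter] at h1
    exact h1 j hj
  -- points in Ioo c d avoid all I l, l ∉ σ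
  have hnot : ∀ l ∈ σᶜ, ∀ x ∈ Set.Ioo c d, x ∉ I l := by
    intro l hl x hx hxl
    have h2 := (hsub hx).2
    exact h2 (Set.mem_biUnion hl hxl)
  -- σ facts
  have hσa : ∀ j ∈ σ, a j ≤ c := by
    intro j hj
    by_contra hcon
    push_neg at hcon
    have hcm : c < min (a j) d := lt_min hcon hcd
    set w := (c + min (a j) d)/2 with hw
    have hw1 : c < w := by rw [hw]; linarith
    have hw2 : w < min (a j) d := by rw [hw]; linarith
    have hwa : w < a j := lt_of_lt_of_le hw2 (min_le_left _ _)
    have hwd : w < d := lt_of_lt_of_le hw2 (min_le_right _ _)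
    have hmem := (hIexp j w).1 (hmemσ j hj w ⟨hw1, hwd⟩)
    rcases hmem with ⟨h1, _⟩
    cases hca : ca j <;> rw [hca] at h1 <;> simp at h1 <;> linarith
  have hσb : ∀ j ∈ σ, d ≤ b j := by
    intro j hj
    by_contra hcon
    push_neg at hcon
    have hcm : max (b j) c < d := max_lt hcon hcd
    set w := (max (b j) c + d)/2 with hw
    have hw1 : max (b j) c < w := by rw [hw]; linarith
    have hw2 : w < d := by rw [hw]; linarith
    have hwb : b j < w := lt_of_le_of_lt (le_max_left _ _) hw1
    have hwc : c < w := lt_of_le_of_lt (le_max_right _ _) hw1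
    have hmem := (hIexp j w).1 (hmemσ j hj w ⟨hwc, hw2⟩)
    rcases hmem with ⟨_, h2⟩
    cases hcb : cb j <;> rw [hcb] at h2 <;> simp at h2 <;> linarith
  -- dichotomy for l ∉ σ
  have hdich : ∀ l ∈ σᶜ, (∀ z ∈ I l, z ≤ c) ∨ (∀ z ∈ I l, d ≤ z) := by
    intro l hl
    by_contra hcon
    push_neg at hcon
    obtain ⟨⟨z₁, hz₁, hz₁c⟩, ⟨z₂, hz₂, hz₂d⟩⟩ := hcon
    -- z₁ > c, z₂ < d
    have hz₁d : d ≤ z₁ := by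
      by_contra h
      push_neg at h
      exact hnot l hl z₁ ⟨hz₁c, h⟩ hz₁
    have hz₂c : z₂ ≤ c := by
      by_contra h
      push_neg at h
      exact hnot l hl z₂ ⟨h, hz₂d⟩ hz₂
    set w := (c + d)/2 with hw
    have hwc : c < w := by rw [hw]; linarith
    have hwd : w < d := by rw [hw]; linarith
    apply hnot l hl w ⟨hwc, hwd⟩
    rw [hIexp]
    have h₂ := (hIexp l z₂).1 hz₂
    have h₁ := (hIexp l z₁).1 hz₁
    obtain ⟨h₂l, -⟩ := h₂
    obtain ⟨-, h₁u⟩ := h₁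
    constructor
    · cases hca : ca l <;> simp only [hca] at h₂l ⊢ <;> simp at h₂l ⊢ <;> linarith
    · cases hcb : cb l <;> simp only [hcb] at h₁u ⊢ <;> simp at h₁u ⊢ <;> linarith
  -- empty case: I l empty implies U' l ≤ L' l
  have hemptyUL : ∀ l, ¬(I l).Nonempty → U' l ≤ L' l := by
    intro l hne
    have hemp : ∀ x : ℝ, x ∉ I l := fun x hx => hne ⟨x, hx⟩
    cases hca : ca l <;> cases hcb : cb l <;>
      simp only [hU'def, hL'def, hca, hcb] <;> simp only [Bool.false_eq_true, ite_true, ite_false, if_true, if_false]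
    · -- ca = false, cb = false : (a,b) open, empty → b ≤ a
      have hba : b l ≤ a l := by
        by_contra h
        push_neg at h
        apply hemp ((a l + b l)/2)
        rw [hIexp]
        simp [hca, hcb]
        constructor <;> linarith
      linarith
    · -- ca = false, cb = true : (a,b], empty → b ≤ a
      have hba : b l ≤ a l := by
        by_contra h
        push_neg at h
        apply hemp ((a l + b l)/2)
        rw [hIexp]
        simp [hca, hcb]
        constructor <;> linarith
      linarith
    · -- ca = true, cb = false : [a,b), empty → b ≤ a
      have hba : b l ≤ a l := by
        by_contra h
        push_neg at h
        apply hemp ((a l + b l)/2)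
        rw [hIexp]
        simp [hca, hcb]
        constructor <;> linarith
      linarith
    · -- ca = true, cb = true : [a,b], empty → b < a, and ε ≤ a - b
      have hba : b l < a l := by
        by_contra h
        push_neg at h
        apply hemp (a l)
        rw [hIexp]
        simp [hca, hcb]
        linarith
      have hne' : a l ≠ b l := by linarith
      have hsep := hmin (a l) (Or.inl ⟨l, rfl⟩) (b l) (Or.inr ⟨l, rfl⟩) hne'
      rw [abs_of_pos (by linarith)] at hsep
      linarith
  -- define lo and hi
  set lo : Fin n → ℝ := fun k =>
    if k ∈ σ then L' k
    else if ((I k).Nonempty ∧ ∀ z ∈ I k, z ≤ c) then U' k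
    else c - ε/3 with hlodef
  set hi : Fin n → ℝ := fun k =>
    if k ∈ σ then U' k
    else if ((I k).Nonempty ∧ ∀ z ∈ I k, z ≤ c) then d + ε/3
    else if (I k).Nonempty then L' k
    else d + ε/3 with hhidef
  -- Plo and Phi predicates
  have key : ∀ v w : ℝ,
      ((∃ e, e ≤ c ∧ v = e - ε/3) ∨ (∃ e ∈ R, e ≤ c ∧ v = e + ε/3)) →
      ((∃ f, d ≤ f ∧ w = f + ε/3) ∨ (∃ f ∈ R, d ≤ f ∧ w = f - ε/3)) →
      v < w := by
    rintro v w (⟨e, he, rfl⟩ | ⟨e, heR, he, rfl⟩) (⟨f, hf, rfl⟩ | ⟨f, hfR, hf, rfl⟩)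
    · linarith
    · linarith
    · linarith
    · have hne : e ≠ f := by intro h; rw [h] at he; linarith
      have hsep := hmin e heR f hfR hne
      rw [abs_of_neg (by linarith : e - f < 0)] at hsep
      linarith
  have hPlo : ∀ k, (∃ e, e ≤ c ∧ lo k = e - ε/3) ∨ (∃ e ∈ R, e ≤ c ∧ lo k = e + ε/3) := by
    intro k
    by_cases hk : k ∈ σ
    · have hak : a k ≤ c := hσa k hk
      rw [hlodef]
      simp only [if_pos hk, hL'def]
      cases hca : ca k <;> simp only [Bool.false_eq_true, if_true, if_false, ite_true, ite_false]
      · exact Or.inr ⟨a k, Or.inl ⟨k, rfl⟩, hak, rfl⟩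
      · exact Or.inl ⟨a k, hak, rfl⟩
    · rw [hlodef]
      simp only [if_neg hk]
      by_cases hc : ((I k).Nonempty ∧ ∀ z ∈ I k, z ≤ c)
      · rw [if_pos hc]
        obtain ⟨⟨z, hz⟩, hall⟩ := hc
        have hz' := (hIexp k z).1 hz
        cases hcb : cb k <;> rw [hU'def] <;>
          simp only [hcb, Bool.false_eq_true, if_true, if_false, ite_true, ite_false]
        · -- cb = false: b k ≤ c, lo = b k - ε/3
          have hbc : b k ≤ c := by
            by_contra h
            push_neg at h
            have hzc : z ≤ c := hall z hz
            have hcm : c < min (b k) d := lt_min h hcd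
            set w := (c + min (b k) d)/2 with hw
            have hw1 : c < w := by rw [hw]; linarith
            have hw2 : w < min (b k) d := by rw [hw]; linarith
            have hwb : w < b k := lt_of_lt_of_le hw2 (min_le_left _ _)
            have hwI : w ∈ I k := by
              rw [hIexp]
              rcases hz' with ⟨hzl, _⟩
              constructor
              · cases hca : ca k <;> rw [hca] at hzl <;> simp at hzl ⊢ <;> linarith
              · rw [hcb]; simpa using hwb
            have := hall w hwI
            linarith
          exact Or.inl ⟨b k, hbc, rfl⟩
        · -- cb = true: b k ∈ I k, b k ≤ c
          have hbI : b k ∈ I k := by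
            rw [hIexp]
            rcases hz' with ⟨hzl, hzu⟩
            rw [hcb] at hzu; simp at hzu
            constructor
            · cases hca : ca k <;> rw [hca] at hzl <;> simp at hzl ⊢ <;> linarith
            · rw [hcb]; simp
          have hbc : b k ≤ c := hall (b k) hbI
          exact Or.inr ⟨b k, Or.inr ⟨k, rfl⟩, hbc, rfl⟩
      · rw [if_neg hc]
        exact Or.inl ⟨c, le_refl c, rfl⟩
  have hPhi : ∀ k, (∃ f, d ≤ f ∧ hi k = f + ε/3) ∨ (∃ f ∈ R, d ≤ f ∧ hi k = f - ε/3) := by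
    intro k
    by_cases hk : k ∈ σ
    · have hbk : d ≤ b k := hσb k hk
      rw [hhidef]
      simp only [if_pos hk, hU'def]
      cases hcb : cb k <;> simp only [Bool.false_eq_true, if_true, if_false, ite_true, ite_false]
      · exact Or.inr ⟨b k, Or.inr ⟨k, rfl⟩, hbk, rfl⟩
      · exact Or.inl ⟨b k, hbk, rfl⟩
    · rw [hhidef]
      simp only [if_neg hk]
      by_cases hc : ((I k).Nonempty ∧ ∀ z ∈ I k, z ≤ c)
      · rw [if_pos hc]
        exact Or.inl ⟨d, le_refl d, rfl⟩
      · rw [if_neg hc]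
        by_cases hne : (I k).Nonempty
        · rw [if_pos hne]
          -- right case: ∀ z ∈ I k, d ≤ z
          have hright : ∀ z ∈ I k, d ≤ z := by
            rcases hdich k (Finset.mem_compl.mpr hk) with h | h
            · exact absurd ⟨hne, h⟩ hc
            · exact h
          obtain ⟨z, hz⟩ := hne
          have hz' := (hIexp k z).1 hz
          cases hca : ca k <;> rw [hL'def] <;>
            simp only [hca, Bool.false_eq_true, if_true, if_false, ite_true, ite_false]
          · -- ca = false: d ≤ a k, hi = a k + ε/3
            have had : d ≤ a k := by
              by_contra h
              push_neg at h
              have hzd : d ≤ z := hright z hz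
              have hcm : max (a k) c < d := max_lt h hcd
              set w := (max (a k) c + d)/2 with hw
              have hw1 : max (a k) c < w := by rw [hw]; linarith
              have hw2 : w < d := by rw [hw]; linarith
              have hwa : a k < w := lt_of_le_of_lt (le_max_left _ _) hw1
              have hwI : w ∈ I k := by
                rw [hIexp]
                rcases hz' with ⟨_, hzu⟩
                constructor
                · rw [hca]; simpa using hwa
                · cases hcb : cb k <;> rw [hcb] at hzu <;> simp at hzu ⊢ <;> linarith
              have := hright w hwI
              linarith
            exact Or.inl ⟨a k, had, rfl⟩
          · -- ca = true: a k ∈ I k, d ≤ a k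
            have haI : a k ∈ I k := by
              rw [hIexp]
              rcases hz' with ⟨hzl, hzu⟩
              rw [hca] at hzl; simp at hzl
              constructor
              · rw [hca]; simp
              · cases hcb : cb k <;> rw [hcb] at hzu <;> simp at hzu ⊢ <;> linarith
            have had : d ≤ a k := hright (a k) haI
            exact Or.inr ⟨a k, Or.inl ⟨k, rfl⟩, had, rfl⟩
        · rw [if_neg hne]
          exact Or.inl ⟨d, le_refl d, rfl⟩
  -- the interval (L, U)
  set L : ℝ := Finset.univ.fold max (c - ε/3) lo with hLdef
  set U : ℝ := Finset.univ.fold min (d + ε/3) hi with hUdef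
  have hPloD : (∃ e, e ≤ c ∧ c - ε/3 = e - ε/3) ∨ (∃ e ∈ R, e ≤ c ∧ c - ε/3 = e + ε/3) :=
    Or.inl ⟨c, le_refl c, rfl⟩
  have hPhiD : (∃ f, d ≤ f ∧ d + ε/3 = f + ε/3) ∨ (∃ f ∈ R, d ≤ f ∧ d + ε/3 = f - ε/3) :=
    Or.inl ⟨d, le_refl d, rfl⟩
  have hLU : L < U := by
    rw [hLdef, Finset.fold_max_lt]
    constructor
    · rw [hUdef, Finset.lt_fold_min]
      exact ⟨key _ _ hPloD hPhiD, fun k _ => key _ _ hPloD (hPhi k)⟩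
    · intro k _
      rw [hUdef, Finset.lt_fold_min]
      exact ⟨key _ _ (hPlo k) hPhiD, fun k' _ => key _ _ (hPlo k) (hPhi k')⟩
  have hloL : ∀ k, lo k ≤ L := by
    intro k
    rw [hLdef, Finset.le_fold_max]
    exact Or.inr ⟨k, Finset.mem_univ k, le_refl _⟩
  have hUhi : ∀ k, U ≤ hi k := by
    intro k
    rw [hUdef, Finset.fold_min_le]
    exact Or.inr ⟨k, Finset.mem_univ k, le_refl _⟩
  set x := (L + U)/2 with hx
  have hLx : L < x := by rw [hx]; linarith
  have hxU : x < U := by rw [hx]; linarith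
  refine ⟨x, ?_, ?_⟩
  · -- x ∈ ⋂ j ∈ σ, I' j
    simp only [Set.mem_iInter]
    intro j hj
    rw [hI'2 j]
    have hloj : lo j = L' j := by rw [hlodef]; simp only [if_pos hj]
    have hhij : hi j = U' j := by rw [hhidef]; simp only [if_pos hj]
    constructor
    · calc L' j = lo j := hloj.symm
        _ ≤ L := hloL j
        _ < x := hLx
    · calc x < U := hxU
        _ ≤ hi j := hUhi j
        _ = U' j := hhij
  · -- x ∉ ⋃ l ∈ σᶜ, I' l
    intro hxin
    simp only [Set.mem_iUnion] at hxin
    obtain ⟨l, hl, hxl⟩ := hxin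
    have hlσ : l ∉ σ := Finset.mem_compl.mp hl
    rw [hI'2 l] at hxl
    obtain ⟨hx1, hx2⟩ := hxl
    by_cases hc : ((I l).Nonempty ∧ ∀ z ∈ I l, z ≤ c)
    · -- left case: lo l = U' l
      have hlol : lo l = U' l := by rw [hlodef]; simp only [if_neg hlσ, if_pos hc]
      have : U' l ≤ L := hlol ▸ hloL l
      linarith
    · by_cases hne : (I l).Nonempty
      · -- right case: hi l = L' l
        have hhil : hi l = L' l := by
          rw [hhidef]; simp only [if_neg hlσ, if_neg hc, if_pos hne]
        have : U ≤ L' l := hhil ▸ hUhi l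
        linarith
      · -- empty case
        have := hemptyUL l hne
        linarith
end
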